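/- The abelianization G/⁅G,G⁆ of the group G is isomorphic to ℤ × ℤ/2ℤ. -/

import Mathlib

open SemidirectProduct Matrix
open scoped commutatorElement

namespace Stmt12Aux

noncomputable section

/-- The automorphism of `ℤ × ℤ` given by multiplication by `1 + √2` on `ℤ[√2] = ℤ ⊕ ℤ√2`. -/
def Amap : (ℤ × ℤ) ≃+ (ℤ × ℤ) where
  toFun v := (v.1 + 2 * v.2, v.1 + v.2)
  invFun v := (-v.1 + 2 * v.2, v.1 - v.2)
  left_inv v := by simp [Prod.ext_iff]; constructor <;> ring
  right_inv v := by simp [Prod.ext_iff]; constructor <;> ring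
  map_add' v w := by simp [Prod.ext_iff]; constructor <;> ring

def A : MulAut (Multiplicative (ℤ × ℤ)) := AddEquiv.toMultiplicative Amap

def phi : Multiplicative ℤ →* MulAut (Multiplicative (ℤ × ℤ)) := zpowersHom _ A

/-- The abstract model for `G`. -/
abbrev HH := Multiplicative (ℤ × ℤ) ⋊[phi] Multiplicative ℤ

/-- Embedding `ℤ × ℤ → ℝ`, `(a, b) ↦ a + b √2`. -/
def emb (v : ℤ × ℤ) : ℝ := v.1 + v.2 * Real.sqrt 2

lemma emb_add (v w : ℤ × ℤ) : emb (v + w) = emb v + emb w := by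
  simp [emb]; push_cast; ring

lemma sqrt2_mul_self : Real.sqrt 2 * Real.sqrt 2 = 2 :=
  Real.mul_self_sqrt (by norm_num)

lemma emb_Amap (v : ℤ × ℤ) : emb (Amap v) = (1 + Real.sqrt 2) * emb v := by
  simp [emb, Amap]
  push_cast
  ring_nf
  rw [Real.sq_sqrt (by norm_num : (2:ℝ) ≥ 0)]
  ring

lemma emb_Amap_symm (v : ℤ × ℤ) : emb (Amap.symm v) = (Real.sqrt 2 - 1) * emb v := by
  simp [emb, Amap]
  push_cast
  ring_nf
  rw [Real.sq_sqrt (by norm_num : (2:ℝ) ≥ 0)]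
  ring

lemma emb_eq_zero {v : ℤ × ℤ} (h : emb v = 0) : v = 0 := by
  obtain ⟨a, b⟩ := v
  simp only [emb] at h
  rcases eq_or_ne b 0 with hb | hb
  · subst hb
    simp at h ⊢
    exact_mod_cast h
  · exfalso
    apply irrational_sqrt_two
    refine ⟨(-a : ℚ) / (b : ℚ), ?_⟩
    have hb' : (b : ℝ) ≠ 0 := Int.cast_ne_zero.mpr hb
    push_cast
    field_simp
    linarith

abbrev M2 := Matrix (Fin 2) (Fin 2) ℝ

/-- translation matrices as a hom from `Multiplicative ℝ`. -/
def TuM : Multiplicative ℝ →* (M2)ˣ :=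
  MonoidHom.mk'
    (fun t => ⟨!![1, t.toAdd; 0, 1], !![1, -t.toAdd; 0, 1],
      by ext i j; fin_cases i <;> fin_cases j <;> simp [Matrix.mul_fin_two, Matrix.one_fin_two],
      by ext i j; fin_cases i <;> fin_cases j <;> simp [Matrix.mul_fin_two, Matrix.one_fin_two]⟩)
    (fun a b => by
      apply Units.ext
      show (!![1, (a.toAdd + b.toAdd); 0, 1] : M2) = _
      rw [Units.val_mul]
      ext i j; fin_cases i <;> fin_cases j <;> simp [Matrix.mul_fin_two] <;> ring)

def Tu (t : ℝ) : (M2)ˣ := TuM (Multiplicative.ofAdd t)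

lemma Tu_val (t : ℝ) : (Tu t : M2) = !![1, t; 0, 1] := rfl

lemma Tu_mul (s t : ℝ) : Tu s * Tu t = Tu (s + t) := (map_mul TuM _ _).symm

lemma Tu_inv (t : ℝ) : (Tu t)⁻¹ = Tu (-t) := by
  show (TuM (Multiplicative.ofAdd t))⁻¹ = TuM (Multiplicative.ofAdd (-t))
  rw [← map_inv]
  rfl

lemma Tu_zpow (t : ℝ) (k : ℤ) : (Tu t) ^ k = Tu (k * t) := by
  rw [Tu, Tu, ← map_zpow, ← ofAdd_zsmul]
  norm_num

/-- the unit `1 + √2` of `ℝ`. -/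
def lamU : ℝˣ :=
  ⟨1 + Real.sqrt 2, Real.sqrt 2 - 1,
    by linear_combination sqrt2_mul_self, by linear_combination sqrt2_mul_self⟩

/-- diagonal matrices `!![u, 0; 0, 1]` as a hom from `ℝˣ`. -/
def DuM : ℝˣ →* (M2)ˣ :=
  MonoidHom.mk'
    (fun u => ⟨!![(u:ℝ), 0; 0, 1], !![((u⁻¹:ℝˣ):ℝ), 0; 0, 1],
      by ext i j; fin_cases i <;> fin_cases j <;>
        simp [Matrix.mul_fin_two, Matrix.one_fin_two],
      by ext i j; fin_cases i <;> fin_cases j <;>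
        simp [Matrix.mul_fin_two, Matrix.one_fin_two]⟩)
    (fun a b => by
      apply Units.ext
      show !![((a*b : ℝˣ):ℝ), 0; 0, 1] = _
      simp [Units.val_mul, Matrix.mul_fin_two])

def G0 : (M2)ˣ := DuM lamU

def H0 : (M2)ˣ := Tu 1

lemma G0_val : (G0 : M2) = !![1 + Real.sqrt 2, 0; 0, 1] := rfl

lemma H0_val : (H0 : M2) = !![1, 1; 0, 1] := rfl

lemma G0_zpow_val (k : ℤ) : ((G0 ^ k : (M2)ˣ) : M2) = !![((lamU ^ k : ℝˣ) : ℝ), 0; 0, 1] := by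
  rw [show G0 ^ k = DuM (lamU ^ k) from (map_zpow DuM _ _).symm]
  rfl

/-- Key conjugation relation. -/
lemma conj_G0_Tu (t : ℝ) : G0 * Tu t * G0⁻¹ = Tu ((1 + Real.sqrt 2) * t) := by
  rw [mul_inv_eq_iff_eq_mul]
  apply Units.ext
  rw [Units.val_mul, Units.val_mul]
  show !![1 + Real.sqrt 2, 0; 0, 1] * !![1, t; 0, 1]
      = !![1, (1 + Real.sqrt 2) * t; 0, 1] * !![1 + Real.sqrt 2, 0; 0, 1]
  ext i j; fin_cases i <;> fin_cases j <;> simp [Matrix.mul_fin_two] <;> ring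

lemma conj_G0inv_Tu (t : ℝ) : G0⁻¹ * Tu t * G0 = Tu ((Real.sqrt 2 - 1) * t) := by
  have := conj_G0_Tu ((Real.sqrt 2 - 1) * t)
  have hl : (1 + Real.sqrt 2) * ((Real.sqrt 2 - 1) * t) = t := by
    linear_combination t * sqrt2_mul_self
  rw [hl] at this
  rw [← this]
  group

/-- `f₁` for `ψ`. -/
def psi1 : Multiplicative (ℤ × ℤ) →* (M2)ˣ :=
  MonoidHom.mk' (fun v => Tu (emb v.toAdd))
    (fun a b => by rw [Tu_mul, ← emb_add]; rfl)

/-- `f₂` for `ψ`. -/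
def psi2 : Multiplicative ℤ →* (M2)ˣ := zpowersHom _ G0

lemma A_apply (v : Multiplicative (ℤ × ℤ)) :
    A v = Multiplicative.ofAdd (Amap v.toAdd) := rfl

lemma A_inv_apply (v : Multiplicative (ℤ × ℤ)) :
    A⁻¹ v = Multiplicative.ofAdd (Amap.symm v.toAdd) := rfl

lemma psi_compat_aux (k : ℤ) (v : Multiplicative (ℤ × ℤ)) :
    psi1 ((A ^ k) v) = G0 ^ k * psi1 v * (G0 ^ k)⁻¹ := by
  induction k using Int.induction_on generalizing v with
  | zero => simp
  | succ n ih =>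
    have h1 : (A ^ ((n : ℤ) + 1)) v = (A ^ (n : ℤ)) (A v) := by
      rw [_root_.zpow_add_one, MulAut.mul_apply]
    rw [h1, ih (A v)]
    have h2 : psi1 (A v) = G0 * psi1 v * G0⁻¹ := by
      show Tu (emb (A v).toAdd) = _
      rw [A_apply, toAdd_ofAdd, emb_Amap, ← conj_G0_Tu]; rfl
    rw [h2]
    group
  | pred n ih =>
    have h1 : (A ^ (-(n : ℤ) - 1)) v = (A ^ (-(n : ℤ))) (A⁻¹ v) := by
      rw [_root_.zpow_sub_one, MulAut.mul_apply]
    rw [h1, ih (A⁻¹ v)]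
    have h2 : psi1 (A⁻¹ v) = G0⁻¹ * psi1 v * G0 := by
      show Tu (emb (A⁻¹ v).toAdd) = _
      rw [A_inv_apply, toAdd_ofAdd, emb_Amap_symm, ← conj_G0inv_Tu]; rfl
    rw [h2]
    group

lemma psi_compat (n : Multiplicative ℤ) :
    psi1.comp (phi n).toMonoidHom
      = (MulAut.conj (psi2 n)).toMonoidHom.comp psi1 := by
  apply MonoidHom.ext; intro v
  show psi1 ((phi n) v) = psi2 n * psi1 v * (psi2 n)⁻¹
  rw [show phi n = A ^ n.toAdd from rfl, show psi2 n = G0 ^ n.toAdd from rfl]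
  exact psi_compat_aux n.toAdd v

def ψ : HH →* (M2)ˣ := SemidirectProduct.lift psi1 psi2 psi_compat

lemma ψ_apply (v : Multiplicative (ℤ × ℤ)) (n : Multiplicative ℤ) :
    ψ ⟨v, n⟩ = Tu (emb v.toAdd) * G0 ^ n.toAdd := by
  rw [mk_eq_inl_mul_inr, _root_.map_mul]
  unfold ψ
  rw [lift_inl, lift_inr]
  rfl

lemma ψ_injective : Function.Injective ψ := by
  rw [injective_iff_map_eq_one]
  rintro ⟨v, n⟩ hx
  rw [ψ_apply] at hx
  have hval : (((Tu (emb v.toAdd) * G0 ^ n.toAdd : (M2)ˣ)) : M2) = (1 : M2) := by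
    rw [hx]; rfl
  rw [Units.val_mul, Tu_val, G0_zpow_val, Matrix.one_fin_two] at hval
  have h00 : ((lamU ^ n.toAdd : ℝˣ) : ℝ) = 1 := by
    have := congrFun (congrFun hval 0) 0
    simpa [Matrix.mul_fin_two] using this
  have h01 : emb v.toAdd = 0 := by
    have := congrFun (congrFun hval 0) 1
    simpa [Matrix.mul_fin_two] using this
  have hn : n.toAdd = 0 := by
    have hinj := zpow_right_injective₀ (a := ((lamU : ℝ)))
      (by rw [show (lamU:ℝ) = 1 + Real.sqrt 2 from rfl]; positivity)
      (by rw [show (lamU:ℝ) = 1 + Real.sqrt 2 from rfl]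
          have := Real.sqrt_pos.mpr (by norm_num : (2:ℝ) > 0)
          intro h; linarith)
    have : ((lamU : ℝ)) ^ n.toAdd = ((lamU : ℝ)) ^ (0 : ℤ) := by
      rw [← Units.val_zpow_eq_zpow_val] at *
      simpa using h00
    exact hinj this
  have hv : v.toAdd = 0 := emb_eq_zero h01
  ext : 1
  · exact hv
  · exact hn

/-- generators of `HH`. -/
def g' : HH := inr (Multiplicative.ofAdd 1)
def h' : HH := inl (Multiplicative.ofAdd (1, 0))
def k1 : HH := inl (Multiplicative.ofAdd ((0 : ℤ), (1 : ℤ)))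
def k2 : HH := inl (Multiplicative.ofAdd ((2 : ℤ), (0 : ℤ)))

lemma phi_ofAdd_one : phi (Multiplicative.ofAdd 1) = A := by
  show A ^ (1:ℤ) = A
  exact zpow_one A

lemma comm_inl (w : ℤ × ℤ) :
    ⁅g', (inl (Multiplicative.ofAdd w) : HH)⁆
      = inl (Multiplicative.ofAdd (Amap w - w)) := by
  rw [commutatorElement_def, g']
  rw [show (inr (Multiplicative.ofAdd (1:ℤ)) : HH)⁻¹
      = inr ((Multiplicative.ofAdd (1:ℤ))⁻¹) from (map_inv _ _).symm]
  rw [show (inr (Multiplicative.ofAdd (1:ℤ)) : HH) * inl (Multiplicative.ofAdd w)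
        * inr ((Multiplicative.ofAdd (1:ℤ))⁻¹)
      = inl (phi (Multiplicative.ofAdd 1) (Multiplicative.ofAdd w)) from (inl_aut _ _).symm]
  rw [show ((inl (Multiplicative.ofAdd w) : HH))⁻¹
      = inl ((Multiplicative.ofAdd w)⁻¹) from (map_inv _ _).symm]
  rw [← _root_.map_mul]
  have hkey : (phi (Multiplicative.ofAdd 1)) (Multiplicative.ofAdd w)
      * (Multiplicative.ofAdd w)⁻¹ = Multiplicative.ofAdd (Amap w - w) := by
    rw [phi_ofAdd_one]
    show Multiplicative.ofAdd (Amap w) * (Multiplicative.ofAdd w)⁻¹ = _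
    rw [← ofAdd_neg, ← ofAdd_add, sub_eq_add_neg]
  rw [hkey]

lemma k1_eq_commutator : k1 = ⁅g', h'⁆ := by
  rw [h', comm_inl]; rfl

lemma k2_eq_commutator : k2 = ⁅g', k1⁆ := by
  rw [k1, comm_inl]; rfl

/-- `f₁` for `χ`: `(a,b) ↦ (0, a mod 2)`. -/
def chi1 : Multiplicative (ℤ × ℤ) →* Multiplicative (ℤ × ZMod 2) :=
  MonoidHom.mk' (fun v => Multiplicative.ofAdd ((0 : ℤ), (v.toAdd.1 : ZMod 2)))
    (fun a b => by
      rw [← ofAdd_add]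
      congr 1
      simp [Prod.ext_iff])

/-- `f₂` for `χ`: `n ↦ (n, 0)`. -/
def chi2 : Multiplicative ℤ →* Multiplicative (ℤ × ZMod 2) :=
  MonoidHom.mk' (fun n => Multiplicative.ofAdd ((n.toAdd : ℤ), (0 : ZMod 2)))
    (fun a b => by
      rfl)

lemma parity_A (w : Multiplicative (ℤ × ℤ)) :
    (((A w).toAdd.1 : ZMod 2)) = (w.toAdd.1 : ZMod 2) := by
  show (((w.toAdd.1 + 2 * w.toAdd.2 : ℤ)) : ZMod 2) = _
  have h2 : (2 : ZMod 2) = 0 := by decide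
  push_cast
  rw [h2]
  ring

lemma parity_A_inv (w : Multiplicative (ℤ × ℤ)) :
    (((A⁻¹ w).toAdd.1 : ZMod 2)) = (w.toAdd.1 : ZMod 2) := by
  show (((-w.toAdd.1 + 2 * w.toAdd.2 : ℤ)) : ZMod 2) = _
  have h2 : (2 : ZMod 2) = 0 := by decide
  push_cast
  rw [h2, CharTwo.neg_eq]
  ring

lemma parity_aux (k : ℤ) (v : Multiplicative (ℤ × ℤ)) :
    (((A ^ k) v).toAdd.1 : ZMod 2) = (v.toAdd.1 : ZMod 2) := by
  induction k using Int.induction_on generalizing v with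
  | zero => simp
  | succ n ih =>
    have h1 : (A ^ ((n : ℤ) + 1)) v = (A ^ (n : ℤ)) (A v) := by
      rw [_root_.zpow_add_one, MulAut.mul_apply]
    rw [h1, ih (A v), parity_A]
  | pred n ih =>
    have h1 : (A ^ (-(n : ℤ) - 1)) v = (A ^ (-(n : ℤ))) (A⁻¹ v) := by
      rw [_root_.zpow_sub_one, MulAut.mul_apply]
    rw [h1, ih (A⁻¹ v), parity_A_inv]

lemma chi_compat (n : Multiplicative ℤ) :
    chi1.comp (phi n).toMonoidHom
      = (MulAut.conj (chi2 n)).toMonoidHom.comp chi1 := by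
  apply MonoidHom.ext; intro v
  show chi1 ((phi n) v) = chi2 n * chi1 v * (chi2 n)⁻¹
  rw [mul_comm (chi2 n) (chi1 v), mul_assoc, mul_inv_cancel, mul_one]
  show Multiplicative.ofAdd ((0:ℤ), ((((A ^ n.toAdd) v).toAdd.1 : ZMod 2)))
      = Multiplicative.ofAdd ((0:ℤ), ((v.toAdd.1 : ZMod 2)))
  rw [parity_aux]

def χ : HH →* Multiplicative (ℤ × ZMod 2) := SemidirectProduct.lift chi1 chi2 chi_compat

lemma χ_apply (v : Multiplicative (ℤ × ℤ)) (n : Multiplicative ℤ) :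
    χ ⟨v, n⟩ = Multiplicative.ofAdd ((n.toAdd : ℤ), (v.toAdd.1 : ZMod 2)) := by
  rw [mk_eq_inl_mul_inr, _root_.map_mul]
  unfold χ
  rw [lift_inl, lift_inr]
  show Multiplicative.ofAdd _ * Multiplicative.ofAdd _ = _
  rw [← ofAdd_add]
  congr 1
  show ((0:ℤ), (v.toAdd.1 : ZMod 2)) + ((n.toAdd:ℤ), (0:ZMod 2)) = _
  rw [Prod.ext_iff]
  constructor <;> simp

lemma cast_val_two (c : ZMod 2) : ((c.val : ℤ) : ZMod 2) = c := by
  revert c; decide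

lemma χ_surjective : Function.Surjective χ := by
  intro y
  refine ⟨⟨Multiplicative.ofAdd ((y.toAdd.2.val : ℤ), (0 : ℤ)),
    Multiplicative.ofAdd y.toAdd.1⟩, ?_⟩
  rw [χ_apply]
  show Multiplicative.ofAdd (y.toAdd.1, (((y.toAdd.2.val : ℤ) : ZMod 2))) = y
  rw [cast_val_two]
  show Multiplicative.ofAdd (y.toAdd.1, y.toAdd.2) = y
  rfl

lemma ker_eq : χ.ker = commutator HH := by
  apply le_antisymm
  · rintro ⟨v, n⟩ hx
    rw [MonoidHom.mem_ker, χ_apply] at hx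
    have hx' : (n.toAdd, (v.toAdd.1 : ZMod 2)) = ((0 : ℤ), (0 : ZMod 2)) :=
      ofAdd_eq_one.mp hx
    have hn : n.toAdd = 0 := congrArg Prod.fst hx'
    have hpar : ((v.toAdd.1 : ZMod 2)) = 0 := congrArg Prod.snd hx'
    obtain ⟨c, hc⟩ : (2 : ℤ) ∣ v.toAdd.1 := by
      have := (ZMod.intCast_zmod_eq_zero_iff_dvd v.toAdd.1 2).mp hpar
      exact_mod_cast this
    have hn1 : n = 1 := by
      have h : n = Multiplicative.ofAdd n.toAdd := rfl
      rw [h, hn]; rfl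
    have hveq : v = (Multiplicative.ofAdd ((2:ℤ),(0:ℤ)))^c
        * (Multiplicative.ofAdd ((0:ℤ),(1:ℤ)))^(v.toAdd.2) := by
      rw [← ofAdd_zsmul, ← ofAdd_zsmul, ← ofAdd_add]
      have h : v = Multiplicative.ofAdd v.toAdd := rfl
      rw [h]
      congr 1
      rw [Prod.ext_iff]
      constructor <;> simp [smul_eq_mul] <;> omega
    have hmem : (⟨v, n⟩ : HH) = k2 ^ c * k1 ^ (v.toAdd.2) := by
      rw [hn1, mk_eq_inl_mul_inr, _root_.map_one, mul_one]
      rw [show k2 ^ c * k1 ^ (v.toAdd.2)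
          = inl ((Multiplicative.ofAdd ((2:ℤ),(0:ℤ)))^c
            * (Multiplicative.ofAdd ((0:ℤ),(1:ℤ)))^(v.toAdd.2)) from by
        rw [_root_.map_mul, _root_.map_zpow, _root_.map_zpow]; rfl]
      rw [← hveq]
    rw [hmem]
    have hk1 : k1 ∈ commutator HH := by
      rw [k1_eq_commutator, commutator_def]
      exact Subgroup.commutator_mem_commutator (Subgroup.mem_top _) (Subgroup.mem_top _)
    have hk2 : k2 ∈ commutator HH := by
      rw [k2_eq_commutator, commutator_def]
      exact Subgroup.commutator_mem_commutator (Subgroup.mem_top _) (Subgroup.mem_top _)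
    exact mul_mem (zpow_mem hk2 _) (zpow_mem hk1 _)
  · exact Abelianization.commutator_subset_ker χ

lemma emb_one_zero : emb ((1 : ℤ), (0 : ℤ)) = 1 := by simp [emb]

lemma ψ_inr_one : ψ g' = G0 := by
  rw [g']; unfold ψ; rw [lift_inr]
  show G0 ^ (1:ℤ) = G0
  exact zpow_one G0

lemma ψ_inl_h : ψ h' = H0 := by
  rw [h']; unfold ψ; rw [lift_inl]
  show Tu (emb ((1:ℤ),(0:ℤ))) = H0
  rw [emb_one_zero]; rfl

lemma Tu_sqrt2_mem : Tu (Real.sqrt 2) = ⁅G0, H0⁆ := by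
  rw [commutatorElement_def]
  rw [show G0 * H0 * G0⁻¹ = Tu ((1 + Real.sqrt 2) * 1) from conj_G0_Tu 1]
  rw [show (H0)⁻¹ = Tu (-1) from Tu_inv 1, Tu_mul]
  norm_num

lemma closure_eq_range : Subgroup.closure {G0, H0} = ψ.range := by
  apply le_antisymm
  · rw [Subgroup.closure_le]
    rintro x hx
    rcases hx with rfl | rfl
    · exact ⟨g', ψ_inr_one⟩
    · exact ⟨h', ψ_inl_h⟩
  · rintro x ⟨⟨v, n⟩, rfl⟩
    rw [ψ_apply]
    have hG : G0 ∈ Subgroup.closure ({G0, H0} : Set (M2)ˣ) :=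
      Subgroup.subset_closure (by simp)
    have hH : H0 ∈ Subgroup.closure ({G0, H0} : Set (M2)ˣ) :=
      Subgroup.subset_closure (by simp)
    have hK : Tu (Real.sqrt 2) ∈ Subgroup.closure ({G0, H0} : Set (M2)ˣ) := by
      rw [Tu_sqrt2_mem, commutatorElement_def]
      exact mul_mem (mul_mem (mul_mem hG hH) (inv_mem hG)) (inv_mem hH)
    have hTu : Tu (emb v.toAdd) ∈ Subgroup.closure ({G0, H0} : Set (M2)ˣ) := by
      have h : Tu (emb v.toAdd)
          = H0 ^ (v.toAdd.1) * (Tu (Real.sqrt 2)) ^ (v.toAdd.2) := by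
        rw [show H0 = Tu 1 from rfl, Tu_zpow, Tu_zpow, Tu_mul]
        congr 1
        simp [emb]
      rw [h]
      exact mul_mem (zpow_mem hH _) (zpow_mem hK _)
    exact mul_mem hTu (zpow_mem hG _)

end

end Stmt12Aux


theorem stmt12 (g h : (Matrix (Fin 2) (Fin 2) ℝ)ˣ)
    (hg : (g : Matrix (Fin 2) (Fin 2) ℝ) = !![1 + Real.sqrt 2, 0; 0, 1])
    (hh : (h : Matrix (Fin 2) (Fin 2) ℝ) = !![1, 1; 0, 1]) :
    Nonempty (Abelianization ↥(Subgroup.closure {g, h})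
      ≃* Multiplicative (ℤ × ZMod 2)) := by
  have hg' : g = Stmt12Aux.G0 := Units.ext (by rw [hg, Stmt12Aux.G0_val])
  have hh' : h = Stmt12Aux.H0 := Units.ext (by rw [hh, Stmt12Aux.H0_val])
  rw [hg', hh']
  have e1 : ↥(Subgroup.closure {Stmt12Aux.G0, Stmt12Aux.H0}) ≃* Stmt12Aux.HH :=
    (MulEquiv.subgroupCongr Stmt12Aux.closure_eq_range).trans
      (MonoidHom.ofInjective Stmt12Aux.ψ_injective).symm
  have e3 : Stmt12Aux.HH ⧸ commutator Stmt12Aux.HH ≃* Multiplicative (ℤ × ZMod 2) :=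
    (QuotientGroup.quotientMulEquivOfEq Stmt12Aux.ker_eq.symm).trans
      (QuotientGroup.quotientKerEquivOfSurjective Stmt12Aux.χ Stmt12Aux.χ_surjective)
  exact ⟨(e1.abelianizationCongr).trans e3⟩
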